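/- If the polar complex Γ(C) of a code C ⊆ 2^[n] is shellable, then C has no sphere link obstructions: for every non-maximal face F of Γ(C), the link link_F Γ(C) is either collapsible or equal to the full polar complex Γ(2^{[n]\supp(F)}) on the remaining vertices. -/

import Mathlib

def polarFace {n : ℕ} (σ : Finset (Fin n)) : Finset (Fin n ⊕ Fin n) :=
  σ.image Sum.inl ∪ σᶜ.image Sum.inr

def polar {n : ℕ} (C : Set (Finset (Fin n))) : Set (Finset (Fin n ⊕ Fin n)) :=
  {F | ∃ σ ∈ C, F ⊆ polarFace σ}

def polarOn {n : ℕ} (V : Finset (Fin n)) (C : Set (Finset (Fin n))) :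
    Set (Finset (Fin n ⊕ Fin n)) :=
  {F | ∃ σ ∈ C, F ⊆ σ.image Sum.inl ∪ (V \ σ).image Sum.inr}

def suppF {n : ℕ} (F : Finset (Fin n ⊕ Fin n)) : Finset (Fin n) :=
  F.image (Sum.elim id id)

section Collapse
variable {V : Type*} [DecidableEq V]

def link (Δ : Set (Finset V)) (T : Finset V) : Set (Finset V) :=
  {ν ∈ Δ | ν ∩ T = ∅ ∧ ν ∪ T ∈ Δ}

def IsFacet (Δ : Set (Finset V)) (τ : Finset V) : Prop :=
  τ ∈ Δ ∧ ∀ s ∈ Δ, τ ⊆ s → s = τ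

def FreePair (Δ : Set (Finset V)) (σ τ : Finset V) : Prop :=
  IsFacet Δ τ ∧ σ ⊂ τ ∧ ∀ τ', IsFacet Δ τ' → σ ⊆ τ' → τ' = τ

def CollapseStep (Δ Δ' : Set (Finset V)) : Prop :=
  ∃ σ τ, FreePair Δ σ τ ∧ Δ' = {ν ∈ Δ | ¬ σ ⊆ ν}

def Collapses (Δ Δ' : Set (Finset V)) : Prop :=
  Relation.ReflTransGen CollapseStep Δ Δ'

def Collapsible (Δ : Set (Finset V)) : Prop :=
  Collapses Δ (∅ : Set (Finset V))

def IsShelling {t : ℕ} (k : ℕ) (F : Fin t → Finset V) : Prop :=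
  (∀ i, (F i).card = k) ∧ Function.Injective F ∧
  ∀ i : Fin t, 0 < (i : ℕ) → ∀ ν ⊆ F i, (∃ j, j < i ∧ ν ⊆ F j) →
    ∃ μ, μ ⊆ F i ∧ (∃ j, j < i ∧ μ ⊆ F j) ∧ ν ⊆ μ ∧ μ.card = k - 1

def Shellable (k : ℕ) (Δ : Set (Finset V)) : Prop :=
  ∃ (t : ℕ) (F : Fin t → Finset V), IsShelling k F ∧ Δ = {ν | ∃ i, ν ⊆ F i}

end Collapse

def pfaceOn {n : ℕ} (V' τ : Finset (Fin n)) : Finset (Fin n ⊕ Fin n) :=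
  τ.image Sum.inl ∪ (V' \ τ).image Sum.inr

variable {n : ℕ}

@[simp] lemma mem_pfaceOn_inl {V' τ : Finset (Fin n)} {a : Fin n} :
    Sum.inl a ∈ pfaceOn V' τ ↔ a ∈ τ := by
  simp [pfaceOn]

@[simp] lemma mem_pfaceOn_inr {V' τ : Finset (Fin n)} {b : Fin n} :
    Sum.inr b ∈ pfaceOn V' τ ↔ b ∈ V' \ τ := by
  simp [pfaceOn]

lemma card_pfaceOn {V' τ : Finset (Fin n)} (h : τ ⊆ V') :
    (pfaceOn V' τ).card = V'.card := by
  rw [pfaceOn, Finset.card_union_of_disjoint, Finset.card_image_of_injective _ Sum.inl_injective,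
    Finset.card_image_of_injective _ Sum.inr_injective, Finset.card_sdiff_of_subset h,
    Nat.add_sub_cancel' (Finset.card_le_card h)]
  simp [Finset.disjoint_left]

lemma pfaceOn_injOn {V' τ₁ τ₂ : Finset (Fin n)} (h : pfaceOn V' τ₁ = pfaceOn V' τ₂) : τ₁ = τ₂ := by
  ext a
  rw [← mem_pfaceOn_inl (V' := V'), h, mem_pfaceOn_inl]

lemma card_polarFace (σ : Finset (Fin n)) : (polarFace σ).card = n := by
  rw [polarFace, Finset.card_union_of_disjoint, Finset.card_image_of_injective _ Sum.inl_injective,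
    Finset.card_image_of_injective _ Sum.inr_injective, Finset.card_add_card_compl]
  · simp
  · simp [Finset.disjoint_left]

@[simp] lemma mem_polarFace_inl {σ : Finset (Fin n)} {a : Fin n} :
    Sum.inl a ∈ polarFace σ ↔ a ∈ σ := by simp [polarFace]

@[simp] lemma mem_polarFace_inr {σ : Finset (Fin n)} {b : Fin n} :
    Sum.inr b ∈ polarFace σ ↔ b ∉ σ := by simp [polarFace]

lemma card_suppF {σ : Finset (Fin n)} {F : Finset (Fin n ⊕ Fin n)} (hF : F ⊆ polarFace σ) :
    (suppF F).card = F.card := by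
  rw [suppF]
  apply Finset.card_image_of_injOn
  intro x hx y hy hxy
  rcases x with a | a <;> rcases y with b | b <;> simp at hxy <;> subst hxy
  · rfl
  · exact absurd (mem_polarFace_inr.mp (hF hy)) (by simpa using (mem_polarFace_inl.mp (hF hx)))
  · exact absurd (mem_polarFace_inr.mp (hF hx)) (by simpa using (mem_polarFace_inl.mp (hF hy)))
  · rfl

lemma mem_suppF {F : Finset (Fin n ⊕ Fin n)} {a : Fin n} :
    a ∈ suppF F ↔ Sum.inl a ∈ F ∨ Sum.inr a ∈ F := by
  constructor
  · rintro h
    obtain ⟨x, hx, hxa⟩ := Finset.mem_image.mp h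
    rcases x with b | b <;> simp at hxa <;> subst hxa
    · exact Or.inl hx
    · exact Or.inr hx
  · rintro (h | h)
    · exact Finset.mem_image.mpr ⟨Sum.inl a, h, rfl⟩
    · exact Finset.mem_image.mpr ⟨Sum.inr a, h, rfl⟩

lemma polarFace_sdiff {σ : Finset (Fin n)} {F : Finset (Fin n ⊕ Fin n)} (hF : F ⊆ polarFace σ) :
    polarFace σ \ F = pfaceOn (suppF F)ᶜ (σ ∩ (suppF F)ᶜ) := by
  ext x
  rcases x with a | b
  · simp only [Finset.mem_sdiff, mem_polarFace_inl, mem_pfaceOn_inl, Finset.mem_inter,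
      Finset.mem_compl]
    constructor
    · rintro ⟨ha, hnF⟩
      refine ⟨ha, fun hs => ?_⟩
      rcases mem_suppF.mp hs with h | h
      · exact hnF h
      · exact absurd (mem_polarFace_inr.mp (hF h)) (by simpa using ha)
    · rintro ⟨ha, hs⟩
      exact ⟨ha, fun hmem => hs (mem_suppF.mpr (Or.inl hmem))⟩
  · simp only [Finset.mem_sdiff, mem_polarFace_inr, mem_pfaceOn_inr, Finset.mem_inter,
      Finset.mem_compl]
    constructor
    · rintro ⟨hb, hnF⟩
      have hs : b ∉ suppF F := by
        intro hs
        rcases mem_suppF.mp hs with h | h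
        · exact hb (mem_polarFace_inl.mp (hF h))
        · exact hnF h
      exact ⟨hs, fun hmem => hb hmem.1⟩
    · rintro ⟨hs, _⟩
      exact ⟨fun hbσ => hs.elim (by tauto), fun hmem => hs (mem_suppF.mpr (Or.inr hmem))⟩

lemma pface_erase_inl {V' τ : Finset (Fin n)} {v : Fin n} (hτV : τ ⊆ V') (hv : v ∈ τ) :
    pfaceOn V' τ \ {Sum.inl v} = pfaceOn (V'.erase v) (τ.erase v) := by
  ext x
  rcases x with a | b <;>
    simp only [Finset.mem_sdiff, Finset.mem_singleton, mem_pfaceOn_inl, mem_pfaceOn_inr,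
      Finset.mem_erase, Sum.inl.injEq, reduceCtorEq, not_false_iff, and_true] <;> aesop

lemma pface_erase_inr {V' τ : Finset (Fin n)} {v : Fin n} (hvV : v ∈ V') (hv : v ∉ τ) :
    pfaceOn V' τ \ {Sum.inr v} = pfaceOn (V'.erase v) τ := by
  ext x
  rcases x with a | b <;>
    simp only [Finset.mem_sdiff, Finset.mem_singleton, mem_pfaceOn_inl, mem_pfaceOn_inr,
      Finset.mem_erase, Sum.inr.injEq, reduceCtorEq, not_false_iff, and_true] <;> aesop

lemma pface_insert_inl {V' ρ : Finset (Fin n)} {v : Fin n} (hρ : ρ ⊆ V'.erase v) (hvV : v ∈ V') :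
    pfaceOn V' (insert v ρ) = insert (Sum.inl v) (pfaceOn (V'.erase v) ρ) := by
  have hvρ : v ∉ ρ := fun h => (Finset.mem_erase.mp (hρ h)).1 rfl
  ext x
  rcases x with a | b <;>
    simp only [Finset.mem_insert, mem_pfaceOn_inl, mem_pfaceOn_inr, Finset.mem_erase,
      Finset.mem_sdiff, Sum.inl.injEq, reduceCtorEq, false_or] <;> aesop

lemma pface_insert_inr {V' ρ : Finset (Fin n)} {v : Fin n} (hρ : ρ ⊆ V'.erase v) (hvV : v ∈ V') :
    pfaceOn V' ρ = insert (Sum.inr v) (pfaceOn (V'.erase v) ρ) := by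
  have hvρ : v ∉ ρ := fun h => (Finset.mem_erase.mp (hρ h)).1 rfl
  ext x
  rcases x with a | b
  · simp only [Finset.mem_insert, mem_pfaceOn_inl, mem_pfaceOn_inr, Finset.mem_erase,
      Finset.mem_sdiff, Sum.inl.injEq, reduceCtorEq, false_or]
  · simp only [Finset.mem_insert, mem_pfaceOn_inl, mem_pfaceOn_inr, Finset.mem_erase,
      Finset.mem_sdiff, Sum.inr.injEq, reduceCtorEq, false_or]
    rcases eq_or_ne b v with h | h <;> aesop

section ShellGeneral
variable {V : Type*} [DecidableEq V] {t k : ℕ} {G : Fin t → Finset V}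

def ridgeSet (G : Fin t → Finset V) (i : Fin t) : Finset V :=
  (G i).filter (fun v => ∃ j, j < i ∧ G i \ {v} ⊆ G j)

lemma old_iff_not_ridge_subset (hsh : IsShelling k G) (hk : 0 < k) (i : Fin t)
    {ν : Finset V} (hν : ν ⊆ G i) :
    (∃ j, j < i ∧ ν ⊆ G j) ↔ ¬ (ridgeSet G i ⊆ ν) := by
  obtain ⟨hcard, hinj, hshell⟩ := hsh
  constructor
  · rintro ⟨j, hj, hνj⟩
    have hi : 0 < (i : ℕ) := lt_of_le_of_lt (Nat.zero_le _) hj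
    obtain ⟨μ, hμi, hμold, hνμ, hμcard⟩ := hshell i hi ν hν ⟨j, hj, hνj⟩
    have hGμcard : (G i \ μ).card = 1 := by
      rw [Finset.card_sdiff_of_subset hμi, hcard i, hμcard]; omega
    obtain ⟨u, hu⟩ := Finset.card_eq_one.mp hGμcard
    have hμeq : μ = G i \ {u} := by
      rw [← hu, Finset.sdiff_sdiff_eq_self hμi]
    have huGi : u ∈ G i := by
      have : u ∈ G i \ μ := hu ▸ Finset.mem_singleton_self u
      exact (Finset.mem_sdiff.mp this).1
    have hur : u ∈ ridgeSet G i := by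
      refine Finset.mem_filter.mpr ⟨huGi, ?_⟩
      obtain ⟨l, hl, hμl⟩ := hμold
      exact ⟨l, hl, hμeq ▸ hμl⟩
    intro hsub
    have : u ∈ μ := hνμ (hsub hur)
    rw [hμeq] at this
    simp at this
  · intro hns
    obtain ⟨u, hur, huν⟩ := Finset.not_subset.mp hns
    obtain ⟨huGi, j, hj, hsub⟩ := Finset.mem_filter.mp hur
    exact ⟨j, hj, (Finset.subset_sdiff.mpr ⟨hν, by simpa using huν⟩).trans hsub⟩

lemma ridge_not_old (hsh : IsShelling k G) (hk : 0 < k) (i : Fin t) :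
    ¬ ∃ j, j < i ∧ ridgeSet G i ⊆ G j := by
  intro h
  have := (old_iff_not_ridge_subset hsh hk i (Finset.filter_subset _ _)).mp h
  exact this subset_rfl

end ShellGeneral

section CollapseLemma
variable {V : Type*} [DecidableEq V] {t k : ℕ} {G : Fin t → Finset V}

def Dm (G : Fin t → Finset V) (m : ℕ) : Set (Finset V) :=
  {ν | ∃ i : Fin t, (i : ℕ) < m ∧ ν ⊆ G i}

lemma mem_Dm {m : ℕ} {ν : Finset V} : ν ∈ Dm G m ↔ ∃ i : Fin t, (i : ℕ) < m ∧ ν ⊆ G i :=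
  Iff.rfl

lemma facet_Dm (hsh : IsShelling k G) {m : ℕ} {i : Fin t} (hi : (i : ℕ) < m) :
    IsFacet (Dm G m) (G i) := by
  have hcard := hsh.1
  refine ⟨mem_Dm.mpr ⟨i, hi, subset_rfl⟩, ?_⟩
  rintro s hs hGs
  obtain ⟨j, hj, hsj⟩ := mem_Dm.mp hs
  have h1 : s = G j := by
    apply Finset.eq_of_subset_of_card_le hsj
    calc (G j).card = k := hcard j
    _ = (G i).card := (hcard i).symm
    _ ≤ s.card := Finset.card_le_card hGs
  have hsub : G i ⊆ G j := by rw [← h1]; exact hGs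
  have h2 : G i = G j := Finset.eq_of_subset_of_card_le hsub (by rw [hcard i, hcard j])
  rw [h1, ← h2]

lemma collapse_step_one (hsh : IsShelling k G) (hk : 0 < k) (ht : 0 < t) :
    CollapseStep (Dm G 1) (∅ : Set (Finset V)) := by
  have hcard := hsh.1
  set i0 : Fin t := ⟨0, ht⟩ with hi0
  have hi0v : ((i0 : Fin t) : ℕ) < 1 := Nat.zero_lt_one
  refine ⟨∅, G i0, ⟨facet_Dm hsh hi0v, ?_, ?_⟩, ?_⟩
  · refine (Finset.ssubset_iff_of_subset (Finset.empty_subset _)).mpr ?_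
    have hne : (G i0).Nonempty := Finset.card_pos.mp (by rw [hcard i0]; exact hk)
    exact ⟨hne.choose, hne.choose_spec, by simp⟩
  · rintro τ' ⟨hmem, hmax⟩ -
    obtain ⟨j, hj, hτ'⟩ := mem_Dm.mp hmem
    exact (hmax (G j) (mem_Dm.mpr ⟨j, hj, subset_rfl⟩) hτ').symm.trans
      (congrArg G (Fin.ext (by omega)))
  · ext ν; simp [Finset.empty_subset]

lemma collapse_step_high (hsh : IsShelling k G) (hk : 0 < k) {m : ℕ} (hm1 : 0 < m)
    (hmt : m < t)
    (hnc : ∃ v ∈ G ⟨m, hmt⟩, ∀ j, j < (⟨m, hmt⟩ : Fin t) → ¬ G ⟨m, hmt⟩ \ {v} ⊆ G j) :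
    CollapseStep (Dm G (m + 1)) (Dm G m) := by
  set im : Fin t := ⟨m, hmt⟩ with him
  have himv : (im : ℕ) = m := rfl
  set r : Finset V := ridgeSet G im with hr
  have hrnotold : ¬ ∃ j, j < im ∧ r ⊆ G j := ridge_not_old hsh hk im
  refine ⟨r, G im, ⟨facet_Dm hsh (by omega), ?_, ?_⟩, ?_⟩
  · refine ⟨Finset.filter_subset _ _, ?_⟩
    intro hsub
    obtain ⟨v, hvG, hv⟩ := hnc
    obtain ⟨-, j, hj, hjsub⟩ := Finset.mem_filter.mp (hsub hvG)
    exact hv j hj hjsub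
  · rintro τ' ⟨hmem, hmax⟩ hrτ'
    obtain ⟨j, hj, hτ'j⟩ := mem_Dm.mp hmem
    have hτ'Gj : τ' = G j := (hmax (G j) (mem_Dm.mpr ⟨j, hj, subset_rfl⟩) hτ'j).symm
    subst hτ'Gj
    rcases eq_or_ne j im with h | h
    · rw [h]
    · exfalso
      apply hrnotold
      refine ⟨j, Fin.lt_def.mpr ?_, hrτ'⟩
      have : (j : ℕ) ≠ m := fun hh => h (Fin.ext (by omega))
      omega
  · ext ν
    constructor
    · intro hmem
      obtain ⟨j, hj, hνj⟩ := mem_Dm.mp hmem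
      refine ⟨mem_Dm.mpr ⟨j, by omega, hνj⟩, ?_⟩
      intro hrν
      exact hrnotold ⟨j, Fin.lt_def.mpr (by omega), hrν.trans hνj⟩
    · intro hm
      obtain ⟨hmem, hnr⟩ := hm
      obtain ⟨j, hj, hνj⟩ := mem_Dm.mp hmem
      rcases Nat.lt_or_ge (j : ℕ) m with h | h
      · exact mem_Dm.mpr ⟨j, h, hνj⟩
      · have hjim : j = im := Fin.ext (by omega)
        subst hjim
        obtain ⟨l, hl, hνl⟩ := (old_iff_not_ridge_subset hsh hk im hνj).mpr hnr
        have hlv : (l : ℕ) < m := by have := Fin.lt_def.mp hl; omega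
        exact mem_Dm.mpr ⟨l, hlv, hνl⟩

lemma shelling_collapsible (hsh : IsShelling k G) (hk : 0 < k) (ht : 0 < t)
    (hnc : ∀ i : Fin t, 0 < (i : ℕ) →
      ∃ v ∈ G i, ∀ j, j < i → ¬ G i \ {v} ⊆ G j) :
    Collapsible {ν | ∃ i, ν ⊆ G i} := by
  have key : ∀ m, m ≤ t → Collapses (Dm G m) (∅ : Set (Finset V)) := by
    intro m
    induction m with
    | zero =>
      intro _
      have : Dm G 0 = (∅ : Set (Finset V)) := by
        ext ν; simp [Dm]
      rw [this]
      exact Relation.ReflTransGen.refl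
    | succ m ih =>
      intro hmt
      rcases Nat.eq_zero_or_pos m with hm | hm
      · subst hm
        exact Relation.ReflTransGen.single (collapse_step_one hsh hk ht)
      · have hmt' : m < t := hmt
        exact Relation.ReflTransGen.head
          (collapse_step_high hsh hk hm hmt' (hnc ⟨m, hmt'⟩ hm)) (ih (le_of_lt hmt))
  have : {ν : Finset V | ∃ i, ν ⊆ G i} = Dm G t := by
    ext ν
    constructor
    · rintro ⟨i, hi⟩; exact ⟨i, i.isLt, hi⟩
    · rintro ⟨i, -, hi⟩; exact ⟨i, hi⟩
  rw [this]
  exact key t le_rfl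
end CollapseLemma

section Subseq
variable {V : Type*} [DecidableEq V] {t k : ℕ} {G : Fin t → Finset V}

lemma subseq_shelling (hsh : IsShelling k G) (F₀ : Finset V) :
    ∃ (t' : ℕ) (e : Fin t' → Fin t), StrictMono e ∧
      (∀ i, F₀ ⊆ G (e i)) ∧ (∀ l, F₀ ⊆ G l → ∃ i, e i = l) ∧
      IsShelling (k - F₀.card) (fun i => G (e i) \ F₀) := by
  classical
  obtain ⟨hcard, hinj, hshell⟩ := hsh
  set s : Finset (Fin t) := Finset.univ.filter (fun i => F₀ ⊆ G i) with hs
  set iso := s.orderIsoOfFin rfl with hiso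
  refine ⟨s.card, fun i => (iso i : Fin t), ?_, ?_, ?_, ?_, ?_, ?_⟩
  · intro a b hab
    exact Subtype.coe_lt_coe.mpr (iso.strictMono hab)
  · intro i
    exact (Finset.mem_filter.mp (iso i).2).2
  · intro l hl
    have hls : l ∈ s := Finset.mem_filter.mpr ⟨Finset.mem_univ _, hl⟩
    exact ⟨iso.symm ⟨l, hls⟩, by simp⟩
  · -- cards
    intro i
    have hFsub : F₀ ⊆ G (iso i : Fin t) := (Finset.mem_filter.mp (iso i).2).2
    rw [Finset.card_sdiff_of_subset hFsub, hcard]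
  · -- injective
    intro a b hab
    simp only at hab
    have hFa : F₀ ⊆ G (iso a : Fin t) := (Finset.mem_filter.mp (iso a).2).2
    have hFb : F₀ ⊆ G (iso b : Fin t) := (Finset.mem_filter.mp (iso b).2).2
    have : G (iso a : Fin t) = G (iso b : Fin t) := by
      rw [← Finset.sdiff_union_of_subset hFa, ← Finset.sdiff_union_of_subset hFb, hab]
    have h2 : (iso a : Fin t) = (iso b : Fin t) := hinj this
    exact iso.injective (Subtype.ext h2)
  · -- shelling condition
    intro i hi ν hν hold
    obtain ⟨j, hj, hνj⟩ := hold
    have hmem : ∀ a, F₀ ⊆ G (iso a : Fin t) :=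
      fun a => (Finset.mem_filter.mp (iso a).2).2
    have hdisj : Disjoint ν F₀ := Finset.disjoint_of_subset_left hν Finset.sdiff_disjoint
    have h1 : ν ∪ F₀ ⊆ G (iso i : Fin t) :=
      Finset.union_subset (hν.trans (Finset.sdiff_subset)) (hmem i)
    have h2 : ν ∪ F₀ ⊆ G (iso j : Fin t) :=
      Finset.union_subset (hνj.trans (Finset.sdiff_subset)) (hmem j)
    have hej : (iso j : Fin t) < (iso i : Fin t) := Subtype.coe_lt_coe.mpr (iso.strictMono hj)
    have hei0 : 0 < ((iso i : Fin t) : ℕ) := lt_of_le_of_lt (Nat.zero_le _) hej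
    obtain ⟨μ, hμi, ⟨l, hl, hμl⟩, hsubμ, hμcard⟩ :=
      hshell (iso i : Fin t) hei0 (ν ∪ F₀) h1 ⟨(iso j : Fin t), hej, h2⟩
    have hF₀μ : F₀ ⊆ μ := (Finset.subset_union_right).trans hsubμ
    have hF₀l : F₀ ⊆ G l := hF₀μ.trans hμl
    have hls : l ∈ s := Finset.mem_filter.mpr ⟨Finset.mem_univ _, hF₀l⟩
    set j' := iso.symm ⟨l, hls⟩ with hj'
    have hej' : (iso j' : Fin t) = l := by rw [hj']; simp
    refine ⟨μ \ F₀, Finset.sdiff_subset_sdiff hμi subset_rfl, ⟨j', ?_, ?_⟩, ?_, ?_⟩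
    · -- j' < i
      have : (iso j' : Fin t) < (iso i : Fin t) := hej' ▸ hl
      have := iso.symm.strictMono (show (⟨(iso j' : Fin t), (iso j').2⟩ : {x // x ∈ s}) < iso i from Subtype.mk_lt_mk.mpr this)
      simpa using this
    · show μ \ F₀ ⊆ G ((iso j' : Fin t)) \ F₀
      rw [hej']
      exact Finset.sdiff_subset_sdiff hμl subset_rfl
    · exact Finset.subset_sdiff.mpr ⟨(Finset.subset_union_left).trans hsubμ, hdisj⟩
    · rw [Finset.card_sdiff_of_subset hF₀μ, hμcard]
      omega

lemma subseq_link_eq (e : Fin t' → Fin t) (hmem : ∀ i, F₀ ⊆ G (e i))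
    (hsurj : ∀ l, F₀ ⊆ G l → ∃ i, e i = l) :
    link {ν | ∃ i, ν ⊆ G i} F₀ = {ν | ∃ i, ν ⊆ G (e i) \ F₀} := by
  ext ν
  constructor
  · rintro ⟨⟨i₁, hν1⟩, hdisj, l, hl⟩
    have hF₀l : F₀ ⊆ G l := (Finset.subset_union_right).trans hl
    obtain ⟨i, hi⟩ := hsurj l hF₀l
    refine ⟨i, Finset.subset_sdiff.mpr ⟨?_, ?_⟩⟩
    · rw [hi]; exact (Finset.subset_union_left).trans hl
    · exact Finset.disjoint_iff_inter_eq_empty.mpr hdisj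
  · rintro ⟨i, hνi⟩
    refine ⟨⟨e i, hνi.trans Finset.sdiff_subset⟩, ?_, ⟨e i, ?_⟩⟩
    · exact Finset.disjoint_iff_inter_eq_empty.mp
        (Finset.disjoint_of_subset_left hνi Finset.sdiff_disjoint)
    · exact Finset.union_subset (hνi.trans Finset.sdiff_subset) (hmem i)
end Subseq


section Chi
variable {V : Type*} [DecidableEq V] [Fintype V] {t k : ℕ} {G : Fin t → Finset V}

def facesUpTo (G : Fin t → Finset V) (m : ℕ) : Finset (Finset V) :=
  Finset.univ.powerset.filter (fun ν => ∃ i : Fin t, (i : ℕ) < m ∧ ν ⊆ G i)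

lemma mem_facesUpTo {m : ℕ} {ν : Finset V} :
    ν ∈ facesUpTo G m ↔ ∃ i : Fin t, (i : ℕ) < m ∧ ν ⊆ G i := by
  simp [facesUpTo]

def intervalF (r g : Finset V) : Finset (Finset V) :=
  (g \ r).powerset.image (· ∪ r)

lemma mem_intervalF {r g ν : Finset V} (hrg : r ⊆ g) :
    ν ∈ intervalF r g ↔ r ⊆ ν ∧ ν ⊆ g := by
  constructor
  · intro h
    obtain ⟨A, hA, rfl⟩ := Finset.mem_image.mp h
    have hA' := Finset.mem_powerset.mp hA
    exact ⟨Finset.subset_union_right,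
      Finset.union_subset (hA'.trans Finset.sdiff_subset) hrg⟩
  · rintro ⟨h1, h2⟩
    refine Finset.mem_image.mpr ⟨ν \ r, Finset.mem_powerset.mpr (Finset.sdiff_subset_sdiff h2 subset_rfl), ?_⟩
    exact Finset.sdiff_union_of_subset h1

lemma sum_intervalF {r g : Finset V} (hrg : r ⊆ g) :
    ∑ ν ∈ intervalF r g, (-1 : ℤ) ^ ν.card
      = if r = g then (-1 : ℤ) ^ g.card else 0 := by
  rw [intervalF, Finset.sum_image]
  · have hcard : ∀ A ∈ (g \ r).powerset, ((A ∪ r).card : ℕ) = A.card + r.card := by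
      intro A hA
      have hd : Disjoint A r :=
        Finset.disjoint_of_subset_left (Finset.mem_powerset.mp hA) Finset.sdiff_disjoint
      rw [Finset.card_union_of_disjoint hd]
    calc ∑ A ∈ (g \ r).powerset, (-1 : ℤ) ^ (A ∪ r).card
        = ∑ A ∈ (g \ r).powerset, (-1 : ℤ) ^ A.card * (-1 : ℤ) ^ r.card := by
          apply Finset.sum_congr rfl
          intro A hA
          rw [hcard A hA, pow_add]
      _ = (∑ A ∈ (g \ r).powerset, (-1 : ℤ) ^ A.card) * (-1 : ℤ) ^ r.card := by
          rw [Finset.sum_mul]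
      _ = (if g \ r = ∅ then 1 else 0) * (-1 : ℤ) ^ r.card := by
          rw [Finset.sum_powerset_neg_one_pow_card]
      _ = if r = g then (-1 : ℤ) ^ g.card else 0 := by
          rcases eq_or_ne r g with h | h
          · subst h
            simp
          · have : g \ r ≠ ∅ := by
              intro hempty
              exact h (subset_antisymm hrg (Finset.sdiff_eq_empty_iff_subset.mp hempty))
            rw [if_neg this, if_neg (fun hh => h hh), zero_mul]
  · intro A hA B hB hAB
    have hdA : Disjoint A r :=
      Finset.disjoint_of_subset_left (Finset.mem_powerset.mp hA) Finset.sdiff_disjoint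
    have hdB : Disjoint B r :=
      Finset.disjoint_of_subset_left (Finset.mem_powerset.mp hB) Finset.sdiff_disjoint
    have : (A ∪ r) \ r = (B ∪ r) \ r := by rw [show A ∪ r = B ∪ r from hAB]
    rwa [Finset.union_sdiff_right, Finset.union_sdiff_right,
      Finset.sdiff_eq_self_of_disjoint hdA, Finset.sdiff_eq_self_of_disjoint hdB] at this

lemma chi_shelling (hsh : IsShelling k G) (hk : 0 < k) :
    ∑ ν ∈ facesUpTo G t, (-1 : ℤ) ^ ν.card
      = ∑ i : Fin t, (if ridgeSet G i = G i then (-1 : ℤ) ^ k else 0) := by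
  have key : ∀ m, m ≤ t →
      ∑ ν ∈ facesUpTo G m, (-1 : ℤ) ^ ν.card
        = ∑ i ∈ Finset.univ.filter (fun i : Fin t => (i : ℕ) < m),
            (if ridgeSet G i = G i then (-1 : ℤ) ^ k else 0) := by
    intro m
    induction m with
    | zero =>
      intro _
      have h1 : facesUpTo G 0 = ∅ := by
        ext ν; simp [mem_facesUpTo]
      have h2 : Finset.univ.filter (fun i : Fin t => (i : ℕ) < 0) = ∅ := by
        ext i; simp
      rw [h1, h2]; simp
    | succ m ih =>
      intro hmt
      have hmt' : m < t := hmt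
      set im : Fin t := ⟨m, hmt'⟩ with him
      have himv : (im : ℕ) = m := rfl
      set r : Finset V := ridgeSet G im with hr
      have hrsub : r ⊆ G im := Finset.filter_subset _ _
      have hsplit : facesUpTo G (m + 1) = facesUpTo G m ∪ intervalF r (G im) := by
        ext ν
        rw [mem_facesUpTo, Finset.mem_union, mem_facesUpTo, mem_intervalF hrsub]
        constructor
        · rintro ⟨i, hi, hν⟩
          rcases Nat.lt_or_ge (i : ℕ) m with h | h
          · exact Or.inl ⟨i, h, hν⟩
          · have : i = im := Fin.ext (by omega)
            subst this
            by_cases hold : ∃ j, j < im ∧ ν ⊆ G j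
            · obtain ⟨j, hj, hνj⟩ := hold
              exact Or.inl ⟨j, by have := Fin.lt_def.mp hj; omega, hνj⟩
            · refine Or.inr ⟨?_, hν⟩
              by_contra hns
              exact hold ((old_iff_not_ridge_subset ⟨hsh.1, hsh.2⟩ hk im hν).mpr hns)
        · rintro (⟨i, hi, hν⟩ | ⟨h1, h2⟩)
          · exact ⟨i, by omega, hν⟩
          · exact ⟨im, by omega, h2⟩
      have hdisj : Disjoint (facesUpTo G m) (intervalF r (G im)) := by
        rw [Finset.disjoint_left]
        intro ν hν hν'
        obtain ⟨i, hi, hνi⟩ := mem_facesUpTo.mp hν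
        obtain ⟨h1, h2⟩ := (mem_intervalF hrsub).mp hν'
        have hold : ∃ j, j < im ∧ ν ⊆ G j := ⟨i, Fin.lt_def.mpr (by omega), hνi⟩
        exact (old_iff_not_ridge_subset ⟨hsh.1, hsh.2⟩ hk im h2).mp hold h1
      have hfilt : Finset.univ.filter (fun i : Fin t => (i : ℕ) < m + 1)
          = insert im (Finset.univ.filter (fun i : Fin t => (i : ℕ) < m)) := by
        ext i
        simp only [Finset.mem_filter, Finset.mem_univ, true_and, Finset.mem_insert]
        constructor
        · intro h
          rcases Nat.lt_or_ge (i : ℕ) m with h' | h'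
          · exact Or.inr h'
          · exact Or.inl (Fin.ext (by omega))
        · rintro (h | h)
          · subst h; omega
          · omega
      have himnot : im ∉ Finset.univ.filter (fun i : Fin t => (i : ℕ) < m) := by
        simp [himv]
      rw [hsplit, Finset.sum_union hdisj, ih (by omega), hfilt, Finset.sum_insert himnot,
        sum_intervalF hrsub]
      rcases eq_or_ne r (G im) with h | h
      · rw [if_pos h, if_pos h, hsh.1 im]
        ring
      · rw [if_neg h, if_neg h]
        ring
  have := key t le_rfl
  rw [this]
  congr 1
  ext i
  simp [i.isLt]
end Chi


section FullChi
variable {n : ℕ}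

def fullFaces (V' : Finset (Fin n)) : Finset (Finset (Fin n ⊕ Fin n)) :=
  Finset.univ.powerset.filter (fun ν => ∃ τ, τ ⊆ V' ∧ ν ⊆ pfaceOn V' τ)

lemma mem_fullFaces {V' : Finset (Fin n)} {ν : Finset (Fin n ⊕ Fin n)} :
    ν ∈ fullFaces V' ↔ ∃ τ, τ ⊆ V' ∧ ν ⊆ pfaceOn V' τ := by
  simp [fullFaces]

lemma chi_fullFaces (V' : Finset (Fin n)) :
    ∑ ν ∈ fullFaces V', (-1 : ℤ) ^ ν.card = (-1 : ℤ) ^ V'.card := by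
  classical
  set f : (Σ _ : Finset (Fin n), Finset (Fin n)) → Finset (Fin n ⊕ Fin n) :=
    fun p => p.1.image Sum.inl ∪ p.2.image Sum.inr with hf
  have himg : fullFaces V' = (V'.powerset.sigma (fun α => (V' \ α).powerset)).image f := by
    ext ν
    rw [mem_fullFaces, Finset.mem_image]
    constructor
    · rintro ⟨τ, hτ, hν⟩
      set α := V'.filter (fun a => Sum.inl a ∈ ν) with hα
      set β := V'.filter (fun b => Sum.inr b ∈ ν) with hβ
      refine ⟨⟨α, β⟩, Finset.mem_sigma.mpr ⟨Finset.mem_powerset.mpr (Finset.filter_subset _ _), Finset.mem_powerset.mpr ?_⟩, ?_⟩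
      · intro b hb
        obtain ⟨hbV, hbν⟩ := Finset.mem_filter.mp hb
        refine Finset.mem_sdiff.mpr ⟨hbV, ?_⟩
        intro hbα
        obtain ⟨-, hbν'⟩ := Finset.mem_filter.mp hbα
        have h1 : b ∈ τ := mem_pfaceOn_inl.mp (hν hbν')
        have h2 : b ∈ V' \ τ := mem_pfaceOn_inr.mp (hν hbν)
        exact (Finset.mem_sdiff.mp h2).2 h1
      · ext x
        rcases x with a | b
        · simp only [hf, Finset.mem_union, Finset.mem_image, Sum.inl.injEq, reduceCtorEq]
          constructor
          · rintro (⟨a', ha', haa⟩ | ⟨b', hb', hbb⟩)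
            · obtain ⟨-, h⟩ := Finset.mem_filter.mp ha'
              exact haa ▸ h
            · exact absurd hbb (by simp)
          · intro hx
            have haV : a ∈ V' := by
              have := mem_pfaceOn_inl.mp (hν hx)
              exact hτ this
            exact Or.inl ⟨a, Finset.mem_filter.mpr ⟨haV, hx⟩, rfl⟩
        · simp only [hf, Finset.mem_union, Finset.mem_image, Sum.inr.injEq, reduceCtorEq]
          constructor
          · rintro (⟨a', ha', haa⟩ | ⟨b', hb', hbb⟩)
            · exact absurd haa (by simp)
            · obtain ⟨-, h⟩ := Finset.mem_filter.mp hb'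
              exact hbb ▸ h
          · intro hx
            have hbV : b ∈ V' := (Finset.mem_sdiff.mp (mem_pfaceOn_inr.mp (hν hx))).1
            exact Or.inr ⟨b, Finset.mem_filter.mpr ⟨hbV, hx⟩, rfl⟩
    · rintro ⟨⟨α, β⟩, hmem, rfl⟩
      obtain ⟨h1, h2⟩ := Finset.mem_sigma.mp hmem
      have hαV : α ⊆ V' := Finset.mem_powerset.mp h1
      have hβV : β ⊆ V' \ α := Finset.mem_powerset.mp h2
      refine ⟨α, hαV, ?_⟩
      apply Finset.union_subset
      · exact (Finset.image_subset_image subset_rfl).trans (Finset.subset_union_left)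
      · exact (Finset.image_subset_image hβV).trans (Finset.subset_union_right)
  rw [himg, Finset.sum_image]
  · rw [Finset.sum_sigma]
    have hinner : ∀ α ∈ V'.powerset,
        ∑ β ∈ (V' \ α).powerset, (-1 : ℤ) ^ (f ⟨α, β⟩).card
          = (-1 : ℤ) ^ α.card * (if V' \ α = ∅ then 1 else 0) := by
      intro α hα
      have hcard : ∀ β ∈ (V' \ α).powerset, (f ⟨α, β⟩).card = α.card + β.card := by
        intro β hβ
        rw [hf]
        simp only
        rw [Finset.card_union_of_disjoint, Finset.card_image_of_injective _ Sum.inl_injective,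
          Finset.card_image_of_injective _ Sum.inr_injective]
        simp [Finset.disjoint_left]
      calc ∑ β ∈ (V' \ α).powerset, (-1 : ℤ) ^ (f ⟨α, β⟩).card
          = ∑ β ∈ (V' \ α).powerset, (-1 : ℤ) ^ α.card * (-1 : ℤ) ^ β.card := by
            apply Finset.sum_congr rfl
            intro β hβ
            rw [hcard β hβ, pow_add]
        _ = (-1 : ℤ) ^ α.card * ∑ β ∈ (V' \ α).powerset, (-1 : ℤ) ^ β.card := by
            rw [Finset.mul_sum]
        _ = (-1 : ℤ) ^ α.card * (if V' \ α = ∅ then 1 else 0) := by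
            rw [Finset.sum_powerset_neg_one_pow_card]
    rw [Finset.sum_congr rfl hinner]
    rw [Finset.sum_eq_single V']
    · simp
    · intro α hα hne
      have : V' \ α ≠ ∅ := by
        intro hempty
        exact hne (subset_antisymm (Finset.mem_powerset.mp hα)
          (Finset.sdiff_eq_empty_iff_subset.mp hempty))
      rw [if_neg this, mul_zero]
    · intro h
      exact absurd (Finset.mem_powerset.mpr subset_rfl) h
  · intro p hp q hq hpq
    obtain ⟨hp1, hp2⟩ := Finset.mem_sigma.mp hp
    obtain ⟨hq1, hq2⟩ := Finset.mem_sigma.mp hq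
    have h1 : p.1 = q.1 := by
      ext a
      have : Sum.inl a ∈ f p ↔ Sum.inl a ∈ f q := by rw [hpq]
      simpa [hf] using this
    have h2 : p.2 = q.2 := by
      ext b
      have : Sum.inr b ∈ f p ↔ Sum.inr b ∈ f q := by rw [hpq]
      simpa [hf] using this
    exact Sigma.ext h1 (heq_of_eq h2)
end FullChi


section FullLemma
variable {n : ℕ}

lemma full_lemma (k : ℕ) :
    ∀ (V' : Finset (Fin n)), V'.card = k →
    ∀ (t : ℕ) (G : Fin t → Finset (Fin n ⊕ Fin n)) (τ : Fin t → Finset (Fin n)),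
      IsShelling k G →
      (∀ i, τ i ⊆ V' ∧ G i = pfaceOn V' (τ i)) →
      ∀ i₀ : Fin t, 0 < (i₀ : ℕ) →
        (∀ v ∈ G i₀, ∃ j, j < i₀ ∧ G i₀ \ {v} ⊆ G j) →
      ∀ ρ ⊆ V', ∃ j, G j = pfaceOn V' ρ := by
  induction k with
  | zero =>
    intro V' hV' t G τ hsh hfac i₀ hi₀pos hi₀cl ρ hρ
    have hV : V' = ∅ := Finset.card_eq_zero.mp hV'
    subst hV
    have hρ0 : ρ = ∅ := Finset.subset_empty.mp hρ
    have hτ0 : τ i₀ = ∅ := Finset.subset_empty.mp (hfac i₀).1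
    exact ⟨i₀, by rw [(hfac i₀).2, hτ0, hρ0]⟩
  | succ k ih =>
    intro V' hV' t G τ hsh hfac i₀ hi₀pos hi₀cl ρ hρ
    rcases Nat.eq_zero_or_pos k with hk0 | hkpos
    · -- base case : one vertex
      subst hk0
      obtain ⟨v, hv⟩ := Finset.card_eq_one.mp hV'
      subst hv
      have ht0 : 0 < t := lt_of_le_of_lt (Nat.zero_le _) i₀.isLt
      set j0 : Fin t := ⟨0, ht0⟩ with hj0
      have hne : j0 ≠ i₀ := by
        intro h
        rw [← h] at hi₀pos
        simp [hj0] at hi₀pos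
      have hGne : G j0 ≠ G i₀ := fun h => hne (hsh.2.1 h)
      have hτne : τ j0 ≠ τ i₀ := fun h => hGne (by rw [(hfac j0).2, (hfac i₀).2, h])
      rcases Finset.subset_singleton_iff.mp (hfac i₀).1 with h1 | h1 <;>
        rcases Finset.subset_singleton_iff.mp (hfac j0).1 with h2 | h2 <;>
        rcases Finset.subset_singleton_iff.mp hρ with h3 | h3
      · exact absurd (h2.trans h1.symm) hτne
      · exact absurd (h2.trans h1.symm) hτne
      · exact ⟨i₀, by rw [(hfac i₀).2, h1, h3]⟩
      · exact ⟨j0, by rw [(hfac j0).2, h2, h3]⟩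
      · exact ⟨j0, by rw [(hfac j0).2, h2, h3]⟩
      · exact ⟨i₀, by rw [(hfac i₀).2, h1, h3]⟩
      · exact absurd (h2.trans h1.symm) hτne
      · exact absurd (h2.trans h1.symm) hτne
    · -- main case
      have ha : ∀ v ∈ V', ∀ ρ' ⊆ V'.erase v,
          ∃ j, G j = pfaceOn V' (if v ∈ τ i₀ then insert v ρ' else ρ') := by
        intro v hvV ρ' hρ'
        set w : Fin n ⊕ Fin n := if v ∈ τ i₀ then Sum.inl v else Sum.inr v with hw
        have hwG : w ∈ G i₀ := by
          rw [(hfac i₀).2, hw]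
          by_cases hvτ : v ∈ τ i₀
          · rw [if_pos hvτ]; exact mem_pfaceOn_inl.mpr hvτ
          · rw [if_neg hvτ]; exact mem_pfaceOn_inr.mpr (Finset.mem_sdiff.mpr ⟨hvV, hvτ⟩)
        obtain ⟨t', e, hmono, hmem, hsurj, hsh'⟩ := subseq_shelling hsh {w}
        have hmem' : ∀ i, w ∈ G (e i) := fun i => Finset.singleton_subset_iff.mp (hmem i)
        have hsh'' : IsShelling k (fun i => G (e i) \ {w}) := by
          simp only [Finset.card_singleton, Nat.add_sub_cancel] at hsh'
          exact hsh'
        have hfac' : ∀ i, (τ (e i)).erase v ⊆ V'.erase v ∧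
            G (e i) \ {w} = pfaceOn (V'.erase v) ((τ (e i)).erase v) := by
          intro i
          refine ⟨Finset.erase_subset_erase v (hfac (e i)).1, ?_⟩
          by_cases hvτ : v ∈ τ i₀
          · have hwv : w = Sum.inl v := by rw [hw, if_pos hvτ]
            have hvτi : v ∈ τ (e i) := by
              have := hmem' i
              rw [hwv, (hfac (e i)).2] at this
              exact mem_pfaceOn_inl.mp this
            rw [hwv, (hfac (e i)).2, pface_erase_inl (hfac (e i)).1 hvτi]
          · have hwv : w = Sum.inr v := by rw [hw, if_neg hvτ]
            have hvτi : v ∉ τ (e i) := by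
              have := hmem' i
              rw [hwv, (hfac (e i)).2] at this
              exact (Finset.mem_sdiff.mp (mem_pfaceOn_inr.mp this)).2
            rw [hwv, (hfac (e i)).2, pface_erase_inr hvV hvτi,
              Finset.erase_eq_of_notMem hvτi]
        obtain ⟨i₀', he₀⟩ := hsurj i₀ (Finset.singleton_subset_iff.mpr hwG)
        have hGi₀card : (G i₀).card = k + 1 := hsh.1 i₀
        have hune : ((G i₀).erase w).Nonempty := by
          rw [← Finset.card_pos, Finset.card_erase_of_mem hwG, hGi₀card]
          omega
        obtain ⟨u, hu⟩ := hune
        have huG : u ∈ G i₀ := Finset.mem_of_mem_erase hu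
        have huw : u ≠ w := Finset.ne_of_mem_erase hu
        obtain ⟨j, hj, hjsub⟩ := hi₀cl u huG
        have hwj : {w} ⊆ G j := by
          refine Finset.singleton_subset_iff.mpr (hjsub ?_)
          exact Finset.mem_sdiff.mpr ⟨hwG, by simpa using fun h => huw h.symm⟩
        obtain ⟨j', hej'⟩ := hsurj j hwj
        have hj'lt : j' < i₀' := by
          rw [← hmono.lt_iff_lt]
          rw [hej', he₀]
          exact hj
        have hpos' : 0 < (i₀' : ℕ) := lt_of_le_of_lt (Nat.zero_le _) (Fin.lt_def.mp hj'lt)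
        have hcl' : ∀ x ∈ G (e i₀') \ {w}, ∃ j'', j'' < i₀' ∧
            (G (e i₀') \ {w}) \ {x} ⊆ G (e j'') \ {w} := by
          intro x hx
          rw [he₀] at hx
          have hxG : x ∈ G i₀ := (Finset.mem_sdiff.mp hx).1
          have hxw : x ≠ w := by simpa using (Finset.mem_sdiff.mp hx).2
          obtain ⟨l, hl, hlsub⟩ := hi₀cl x hxG
          have hwl : {w} ⊆ G l := by
            refine Finset.singleton_subset_iff.mpr (hlsub ?_)
            exact Finset.mem_sdiff.mpr ⟨hwG, by simpa using fun h => hxw h.symm⟩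
          obtain ⟨l', hel'⟩ := hsurj l hwl
          refine ⟨l', ?_, ?_⟩
          · rw [← hmono.lt_iff_lt, hel', he₀]
            exact hl
          · rw [hel', he₀]
            intro y hy
            simp only [Finset.mem_sdiff, Finset.mem_singleton] at hy ⊢
            exact ⟨hlsub (Finset.mem_sdiff.mpr ⟨hy.1.1, by simpa using hy.2⟩), hy.1.2⟩
        have hccard : (V'.erase v).card = k := by
          rw [Finset.card_erase_of_mem hvV, hV']
          omega
        obtain ⟨j'', hj''⟩ := ih (V'.erase v) hccard t' (fun i => G (e i) \ {w})
          (fun i => (τ (e i)).erase v) hsh'' hfac' i₀' hpos' hcl' ρ' hρ'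
        have hGej : G (e j'') = insert w (pfaceOn (V'.erase v) ρ') := by
          rw [← hj'']
          show G (e j'') = insert w (G (e j'') \ {w})
          rw [Finset.sdiff_singleton_eq_erase, Finset.insert_erase (hmem' j'')]
        refine ⟨e j'', ?_⟩
        by_cases hvτ : v ∈ τ i₀
        · rw [if_pos hvτ, hGej, hw, if_pos hvτ, pface_insert_inl hρ' hvV]
        · rw [if_neg hvτ, hGej, hw, if_neg hvτ, ← pface_insert_inr hρ' hvV]
      have hb1 : ∀ ρ₁ ⊆ V', ρ₁ ≠ V' \ τ i₀ → ∃ j, G j = pfaceOn V' ρ₁ := by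
        intro ρ₁ hρ₁ hne
        have hexv : ∃ v ∈ V', (v ∈ ρ₁ ∧ v ∈ τ i₀) ∨ (v ∉ ρ₁ ∧ v ∉ τ i₀) := by
          by_contra hcon
          push_neg at hcon
          apply hne
          ext a
          constructor
          · intro haρ
            have haV : a ∈ V' := hρ₁ haρ
            have := hcon a haV
            refine Finset.mem_sdiff.mpr ⟨haV, ?_⟩
            tauto
          · intro haS
            obtain ⟨haV, haτ⟩ := Finset.mem_sdiff.mp haS
            have := hcon a haV
            tauto
        obtain ⟨v, hvV, hcase⟩ := hexv
        rcases hcase with ⟨hvρ, hvτ⟩ | ⟨hvρ, hvτ⟩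
        · have := ha v hvV (ρ₁.erase v) (Finset.erase_subset_erase v hρ₁)
          rw [if_pos hvτ, Finset.insert_erase hvρ] at this
          exact this
        · have := ha v hvV ρ₁ (Finset.subset_erase.mpr ⟨hρ₁, hvρ⟩)
          rw [if_neg hvτ] at this
          exact this
      by_cases hanti : ∃ j, G j = pfaceOn V' (V' \ τ i₀)
      · rcases eq_or_ne ρ (V' \ τ i₀) with h | h
        · rw [h]; exact hanti
        · exact hb1 ρ hρ h
      · exfalso
        have hfaces : facesUpTo G t = fullFaces V' \ {pfaceOn V' (V' \ τ i₀)} := by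
          ext ν
          rw [mem_facesUpTo, Finset.mem_sdiff, mem_fullFaces, Finset.mem_singleton]
          constructor
          · rintro ⟨i, hi, hν⟩
            refine ⟨⟨τ i, (hfac i).1, (hfac i).2 ▸ hν⟩, ?_⟩
            intro heq
            apply hanti
            have hcν : (G i).card ≤ ν.card := by
              rw [hsh.1 i, heq, card_pfaceOn (Finset.sdiff_subset), hV']
            have hνG : ν = G i := Finset.eq_of_subset_of_card_le hν hcν
            exact ⟨i, by rw [← hνG, heq]⟩
          · rintro ⟨⟨τ₀, hτ₀, hν⟩, hne⟩
            rcases eq_or_ne τ₀ (V' \ τ i₀) with h | h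
            · subst h
              have hss : ν ⊂ pfaceOn V' (V' \ τ i₀) :=
                Finset.ssubset_iff_subset_ne.mpr ⟨hν, hne⟩
              obtain ⟨x, hxp, hxν⟩ := Finset.exists_of_ssubset hss
              rcases x with a | b
              · have ha' : a ∈ V' \ τ i₀ := mem_pfaceOn_inl.mp hxp
                have hne'' : (V' \ τ i₀).erase a ≠ V' \ τ i₀ := by
                  rw [Ne, Finset.erase_eq_self]
                  simpa using ha'
                obtain ⟨j, hj⟩ := hb1 ((V' \ τ i₀).erase a)
                  ((Finset.erase_subset _ _).trans Finset.sdiff_subset) hne''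
                refine ⟨j, j.isLt, ?_⟩
                rw [hj]
                intro y hy
                rcases y with c | c
                · have hc : c ∈ V' \ τ i₀ := mem_pfaceOn_inl.mp (hν hy)
                  refine mem_pfaceOn_inl.mpr (Finset.mem_erase.mpr ⟨?_, hc⟩)
                  intro hca
                  exact hxν (hca ▸ hy)
                · have hc : c ∈ V' \ (V' \ τ i₀) := mem_pfaceOn_inr.mp (hν hy)
                  refine mem_pfaceOn_inr.mpr ?_
                  refine Finset.mem_sdiff.mpr ⟨(Finset.mem_sdiff.mp hc).1, ?_⟩
                  intro hmem2
                  exact (Finset.mem_sdiff.mp hc).2 (Finset.mem_of_mem_erase hmem2)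
              · have hb' : b ∈ V' \ (V' \ τ i₀) := mem_pfaceOn_inr.mp hxp
                have hbV : b ∈ V' := (Finset.mem_sdiff.mp hb').1
                have hbα : b ∉ V' \ τ i₀ := (Finset.mem_sdiff.mp hb').2
                have hne'' : insert b (V' \ τ i₀) ≠ V' \ τ i₀ := by
                  intro hh
                  exact hbα (hh ▸ Finset.mem_insert_self b _)
                obtain ⟨j, hj⟩ := hb1 (insert b (V' \ τ i₀))
                  (Finset.insert_subset hbV Finset.sdiff_subset) hne''
                refine ⟨j, j.isLt, ?_⟩
                rw [hj]
                intro y hy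
                rcases y with c | c
                · have hc : c ∈ V' \ τ i₀ := mem_pfaceOn_inl.mp (hν hy)
                  exact mem_pfaceOn_inl.mpr (Finset.mem_insert_of_mem hc)
                · have hc : c ∈ V' \ (V' \ τ i₀) := mem_pfaceOn_inr.mp (hν hy)
                  refine mem_pfaceOn_inr.mpr ?_
                  refine Finset.mem_sdiff.mpr ⟨(Finset.mem_sdiff.mp hc).1, ?_⟩
                  intro hmem2
                  rcases Finset.mem_insert.mp hmem2 with hcb | hcα
                  · exact hxν (hcb ▸ hy)
                  · exact (Finset.mem_sdiff.mp hc).2 hcα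
            · obtain ⟨j, hj⟩ := hb1 τ₀ hτ₀ h
              exact ⟨j, j.isLt, hj ▸ hν⟩
        have hridge : ridgeSet G i₀ = G i₀ := by
          rw [ridgeSet, Finset.filter_eq_self]
          exact hi₀cl
        have hchi := chi_shelling hsh (by omega : 0 < k + 1)
        have hL : ∑ ν ∈ facesUpTo G t, (-1 : ℤ) ^ ν.card = 0 := by
          have hsing : {pfaceOn V' (V' \ τ i₀)} ⊆ fullFaces V' :=
            Finset.singleton_subset_iff.mpr
              (mem_fullFaces.mpr ⟨V' \ τ i₀, Finset.sdiff_subset, subset_rfl⟩)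
          rw [hfaces, Finset.sum_sdiff_eq_sub hsing, chi_fullFaces, Finset.sum_singleton,
            card_pfaceOn Finset.sdiff_subset, hV', sub_self]
        have hsum : ∑ i : Fin t, (if ridgeSet G i = G i then (-1 : ℤ) ^ (k + 1) else 0)
            = (-1 : ℤ) ^ (k + 1) *
              ∑ i : Fin t, (if ridgeSet G i = G i then (1 : ℤ) else 0) := by
          rw [Finset.mul_sum]
          apply Finset.sum_congr rfl
          intro i _
          split <;> ring
        have hN : (1 : ℤ) ≤ ∑ i : Fin t, (if ridgeSet G i = G i then (1 : ℤ) else 0) := by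
          have hmono2 := Finset.single_le_sum
            (f := fun i : Fin t => if ridgeSet G i = G i then (1 : ℤ) else 0)
            (fun i _ => by split <;> norm_num) (Finset.mem_univ i₀)
          simpa [hridge] using hmono2
        rw [hL, hsum] at hchi
        have hpow : ((-1 : ℤ)) ^ (k + 1) ≠ 0 := by
          apply pow_ne_zero; norm_num
        have : ∑ i : Fin t, (if ridgeSet G i = G i then (1 : ℤ) else 0) = 0 := by
          rcases mul_eq_zero.mp hchi.symm with h | h
          · exact absurd h hpow
          · exact h
        omega
end FullLemma

/-- If `Γ(C)` is shellable then `C` has no sphere link obstructions: for every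
non-maximal face `F` of `Γ(C)`, the link of `F` is either collapsible or equal to
the full polar complex `Γ(2^{[n] \ supp F})` on the remaining vertices. -/
theorem shellable_no_sphere_link_obstruction {n : ℕ} (C : Set (Finset (Fin n)))
    (hsh : Shellable n (polar C)) (F : Finset (Fin n ⊕ Fin n))
    (hF : F ∈ polar C) (hnonmax : ¬ IsFacet (polar C) F) :
    Collapsible (link (polar C) F) ∨
      link (polar C) F = polarOn (suppF F)ᶜ {τ | τ ⊆ (suppF F)ᶜ} := by
  classical
  obtain ⟨t, G, hsh, hΔ⟩ := hsh
  obtain ⟨σF, hσFC, hFσ⟩ := id hF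
  have hcardF : F.card < n := by
    have hle : F.card ≤ n := by
      calc F.card ≤ (polarFace σF).card := Finset.card_le_card hFσ
        _ = n := card_polarFace σF
    rcases lt_or_eq_of_le hle with h | h
    · exact h
    · exfalso
      apply hnonmax
      refine ⟨hF, ?_⟩
      rintro s ⟨σ', hσ', hsσ'⟩ hFs
      have hcs : s.card ≤ F.card := by
        calc s.card ≤ (polarFace σ').card := Finset.card_le_card hsσ'
          _ = n := card_polarFace σ'
          _ = F.card := h.symm
      exact (Finset.eq_of_subset_of_card_le hFs hcs).symm
  have hGl : ∀ l : Fin t, ∃ σ, σ ∈ C ∧ G l = polarFace σ := by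
    intro l
    have hmem : G l ∈ polar C := by
      rw [hΔ]; exact ⟨l, subset_rfl⟩
    obtain ⟨σ, hσ, hsub⟩ := hmem
    exact ⟨σ, hσ, Finset.eq_of_subset_of_card_le hsub
      (by rw [card_polarFace, hsh.1 l])⟩
  choose σG hσGC hσGeq using hGl
  have hFmem : F ∈ {ν : Finset (Fin n ⊕ Fin n) | ∃ i, ν ⊆ G i} := hΔ ▸ hF
  obtain ⟨t', e, hmono, hmem, hsurj, hsh'⟩ := subseq_shelling hsh F
  obtain ⟨i₁, hi₁⟩ := hFmem
  obtain ⟨i₁', -⟩ := hsurj i₁ hi₁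
  have ht' : 0 < t' := i₁'.pos
  have hk' : 0 < n - F.card := by omega
  have hV'card : ((suppF F)ᶜ : Finset (Fin n)).card = n - F.card := by
    rw [Finset.card_compl, card_suppF hFσ, Fintype.card_fin]
  have hlink : link (polar C) F = {ν | ∃ i, ν ⊆ G (e i) \ F} := by
    rw [hΔ]
    exact subseq_link_eq e hmem hsurj
  have hFsubGe : ∀ i, F ⊆ polarFace (σG (e i)) := by
    intro i
    rw [← hσGeq (e i)]
    exact hmem i
  have hfac : ∀ i : Fin t', (σG (e i) ∩ (suppF F)ᶜ ⊆ (suppF F)ᶜ) ∧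
      (G (e i) \ F = pfaceOn (suppF F)ᶜ (σG (e i) ∩ (suppF F)ᶜ)) := by
    intro i
    refine ⟨Finset.inter_subset_right, ?_⟩
    rw [hσGeq (e i)]
    exact polarFace_sdiff (hFsubGe i)
  by_cases hclose : ∃ i₀ : Fin t', 0 < (i₀ : ℕ) ∧ ∀ v ∈ G (e i₀) \ F,
      ∃ j, j < i₀ ∧ (G (e i₀) \ F) \ {v} ⊆ G (e j) \ F
  · right
    obtain ⟨i₀, hpos, hcl⟩ := hclose
    have hfull := full_lemma (n - F.card) ((suppF F)ᶜ) hV'card t'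
      (fun i => G (e i) \ F) (fun i => σG (e i) ∩ (suppF F)ᶜ) hsh' hfac i₀ hpos hcl
    rw [hlink]
    ext ν
    constructor
    · rintro ⟨i, hνi⟩
      refine ⟨σG (e i) ∩ (suppF F)ᶜ, Finset.inter_subset_right, ?_⟩
      have h2 := (hfac i).2
      rw [h2] at hνi
      exact hνi
    · rintro ⟨τ₀, hτ₀, hν⟩
      obtain ⟨j, hj⟩ := hfull τ₀ hτ₀
      refine ⟨j, ?_⟩
      show ν ⊆ G (e j) \ F
      have : G (e j) \ F = pfaceOn (suppF F)ᶜ τ₀ := hj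
      rw [this]
      exact hν
  · left
    push_neg at hclose
    rw [Collapsible, hlink]
    apply shelling_collapsible hsh' hk' ht'
    intro i hi
    obtain ⟨v, hv1, hv2⟩ := hclose i hi
    exact ⟨v, hv1, hv2⟩
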